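/- For parameters ε_x, ε_y ∈ (-1,1) with ε_x + ε_y < 0, consider the 3×3 real matrices M₀ = [[(1-ε_y)/2, 1, 0], [-(1+ε_x)/2, 0, 1], [1, 0, 0]] and M₁ = [[(1-ε_x)/2, 1, 0], [-(1+ε_y)/2, 0, 1], [1, 0, 0]]. Then for every y ∈ ℝ³ with all three components strictly negative, each component of (M₁M₀)^k y tends to -∞ as k → ∞, and each component of (M₀M₁)^k y tends to -∞ as k → ∞. Equivalently, U^{-∞}(M₁M₀) = U^{-∞}(M₀M₁) = { y ∈ ℝ³ : y_i < 0 for i = 1,2,3 }. -/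

import Mathlib

open Matrix MeasureTheory Filter Set
open Topology

noncomputable section

/-- `U^{-∞}(M)`: points of the open negative orthant all of whose iterates under `M`
tend to `-∞` in every coordinate. -/
def UnegInf {N : ℕ} (M : Matrix (Fin N) (Fin N) ℝ) : Set (Fin N → ℝ) :=
  {y | (∀ i, y i < 0) ∧ ∀ i, Tendsto (fun k : ℕ => ((M ^ k) *ᵥ y) i) atTop atBot}

/-- The basic transition matrix `M₀` of the RSP cycle `C₀`. -/
def M₀ (εx εy : ℝ) : Matrix (Fin 3) (Fin 3) ℝ :=
  !![(1 - εy)/2, 1, 0; -(1 + εx)/2, 0, 1; 1, 0, 0]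

/-- The basic transition matrix `M₁` of the RSP cycle `C₀`. -/
def M₁ (εx εy : ℝ) : Matrix (Fin 3) (Fin 3) ℝ :=
  !![(1 - εx)/2, 1, 0; -(1 + εy)/2, 0, 1; 1, 0, 0]



/-- Jury criterion: both roots of `x^2 - p x + q` have modulus `< 1`. -/
lemma jury_roots (p q : ℝ) (hq0 : 0 < q) (hq1 : q < 1) (hQ1 : 0 < 1 - p + q)
    (hQm1 : 0 < 1 + p + q) :
    ∃ r1 r2 : ℂ, r1 + r2 = (p : ℂ) ∧ r1 * r2 = (q : ℂ) ∧ ‖r1‖ < 1 ∧ ‖r2‖ < 1 := by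
  rcases le_or_gt (p ^ 2) (4 * q) with h | h
  · -- complex-conjugate (or double) roots of modulus √q < 1
    set m : ℝ := Real.sqrt (4 * q - p ^ 2) with hm
    have hm2 : m ^ 2 = 4 * q - p ^ 2 := Real.sq_sqrt (by linarith)
    refine ⟨⟨p / 2, m / 2⟩, ⟨p / 2, -(m / 2)⟩, ?_, ?_, ?_, ?_⟩
    · apply Complex.ext <;> simp
    · apply Complex.ext <;> simp [Complex.mul_re, Complex.mul_im] <;> nlinarith
    · have h1 : ‖(⟨p / 2, m / 2⟩ : ℂ)‖ ^ 2 = q := by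
        rw [Complex.sq_norm, Complex.normSq_mk]
        nlinarith
      nlinarith [norm_nonneg (⟨p / 2, m / 2⟩ : ℂ)]
    · have h1 : ‖(⟨p / 2, -(m / 2)⟩ : ℂ)‖ ^ 2 = q := by
        rw [Complex.sq_norm, Complex.normSq_mk]
        nlinarith
      nlinarith [norm_nonneg (⟨p / 2, -(m / 2)⟩ : ℂ)]
  · -- real roots
    set m : ℝ := Real.sqrt (p ^ 2 - 4 * q) with hm
    have hm0 : 0 ≤ m := Real.sqrt_nonneg _
    have hm2 : m ^ 2 = p ^ 2 - 4 * q := Real.sq_sqrt (by linarith)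
    have hmlt1 : m < 2 - p := by
      have h2p : 0 < 2 - p := by nlinarith
      nlinarith
    have hmlt2 : m < 2 + p := by
      have h2p : 0 < 2 + p := by nlinarith
      nlinarith
    refine ⟨(((p + m) / 2 : ℝ) : ℂ), (((p - m) / 2 : ℝ) : ℂ), ?_, ?_, ?_, ?_⟩
    · push_cast; ring
    · push_cast
      have : (p + m) / 2 * ((p - m) / 2) = q := by nlinarith
      rw [← this]; push_cast; ring
    · rw [Complex.norm_real, Real.norm_eq_abs, abs_lt]
      constructor <;> nlinarith
    · rw [Complex.norm_real, Real.norm_eq_abs, abs_lt]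
      constructor <;> nlinarith

/-- Solutions of a second order recurrence whose characteristic roots have modulus `< 1`
decay like `(C₁ + C₂ k) ρ^k`. -/
lemma seq_decay (p q : ℝ) (g : ℕ → ℝ) (hq0 : 0 < q) (hq1 : q < 1) (hQ1 : 0 < 1 - p + q)
    (hQm1 : 0 < 1 + p + q)
    (hrec : ∀ k, g (k + 2) = p * g (k + 1) - q * g k) :
    ∃ C1 C2 ρ : ℝ, 0 ≤ C1 ∧ 0 ≤ C2 ∧ 0 < ρ ∧ ρ < 1 ∧
      ∀ k : ℕ, |g k| ≤ (C1 + C2 * k) * ρ ^ k := by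
  obtain ⟨r1, r2, hsum', hprod, h1, h2⟩ := jury_roots p q hq0 hq1 hQ1 hQm1
  set ρ : ℝ := max ‖r1‖ ‖r2‖ with hρ
  have hr1ρ : ‖r1‖ ≤ ρ := le_max_left _ _
  have hr2ρ : ‖r2‖ ≤ ρ := le_max_right _ _
  have hρ1 : ρ < 1 := max_lt h1 h2
  have hr10 : r1 ≠ 0 := by
    intro h0
    rw [h0, zero_mul] at hprod
    exact_mod_cast hq0.ne' (by exact_mod_cast hprod.symm)
  have hρ0 : 0 < ρ := lt_of_lt_of_le (norm_pos_iff.mpr hr10) hr1ρ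
  set u : ℕ → ℂ := fun k => (g (k + 1) : ℂ) - r1 * (g k : ℂ) with hu_def
  have hu : ∀ k, u (k + 1) = r2 * u k := by
    intro k
    have hc : ((g (k + 2) : ℝ) : ℂ) = (p : ℂ) * (g (k + 1) : ℂ) - (q : ℂ) * (g k : ℂ) := by
      push_cast [hrec k]; ring
    simp only [hu_def]
    linear_combination hc - (g (k + 1) : ℂ) * hsum' + (g k : ℂ) * hprod
  have huk : ∀ k, ‖u k‖ ≤ ‖u 0‖ * ρ ^ k := by
    intro k
    induction k with
    | zero => simp
    | succ n ih =>
      rw [hu n]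
      calc ‖r2 * u n‖ = ‖r2‖ * ‖u n‖ := norm_mul _ _
        _ ≤ ρ * (‖u 0‖ * ρ ^ n) := by
            apply mul_le_mul hr2ρ ih (norm_nonneg _) hρ0.le
        _ = ‖u 0‖ * ρ ^ (n + 1) := by ring
  have hgk : ∀ k : ℕ, ‖(g k : ℂ)‖ ≤ (‖(g 0 : ℂ)‖ + (‖u 0‖ / ρ) * k) * ρ ^ k := by
    intro k
    induction k with
    | zero => simp
    | succ n ih =>
      have hgn : (g (n + 1) : ℂ) = r1 * (g n : ℂ) + u n := by simp [hu_def]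
      have : ‖(g (n + 1) : ℂ)‖ ≤ ‖r1‖ * ‖(g n : ℂ)‖ + ‖u n‖ := by
        rw [hgn]
        exact (norm_add_le _ _).trans (by rw [norm_mul])
      refine this.trans ?_
      have e1 : ‖r1‖ * ‖(g n : ℂ)‖ ≤ ρ * ((‖(g 0 : ℂ)‖ + (‖u 0‖ / ρ) * n) * ρ ^ n) :=
        mul_le_mul hr1ρ ih (norm_nonneg _) hρ0.le
      have e2 : ‖u n‖ ≤ ‖u 0‖ * ρ ^ n := huk n
      have : ρ * ((‖(g 0 : ℂ)‖ + (‖u 0‖ / ρ) * n) * ρ ^ n) + ‖u 0‖ * ρ ^ n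
          = (‖(g 0 : ℂ)‖ + (‖u 0‖ / ρ) * (n + 1)) * ρ ^ (n + 1) := by
        field_simp
        ring
      push_cast
      nlinarith [pow_pos hρ0 n]
  refine ⟨‖(g 0 : ℂ)‖, ‖u 0‖ / ρ, ρ, norm_nonneg _, by positivity, hρ0, hρ1, ?_⟩
  intro k
  have := hgk k
  rwa [Complex.norm_real, Real.norm_eq_abs] at this

/-- Core convergence lemma: if `A` satisfies the cubic `A³ = tA² - sA + 1` whose
characteristic polynomial has a root `lam > 1`, is negative at `±1`, and `w` is a positive
left `lam`-eigenvector such that right `lam`-eigenvectors with `w ⬝ᵥ L < 0` are negative,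
then all iterates of `y` (with `w ⬝ᵥ y < 0`) tend to `-∞` componentwise. -/
lemma core (A : Matrix (Fin 3) (Fin 3) ℝ) (t s lam : ℝ) (w : Fin 3 → ℝ)
    (hCH : A ^ 3 = t • A ^ 2 - s • A + 1)
    (hlam : 1 < lam) (hchar : lam ^ 3 - t * lam ^ 2 + s * lam - 1 = 0)
    (hP1 : s - t < 0) (hPm1 : -2 - t - s < 0)
    (hwA : w ᵥ* A = lam • w)
    (hLneg : ∀ L : Fin 3 → ℝ, A *ᵥ L = lam • L → w ⬝ᵥ L < 0 → ∀ i, L i < 0)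
    (y : Fin 3 → ℝ) (hwy : w ⬝ᵥ y < 0) :
    ∀ i, Tendsto (fun k : ℕ => ((A ^ k) *ᵥ y) i) atTop atBot := by
  have hlam0 : (0 : ℝ) < lam := lt_trans one_pos hlam
  have hlamne : lam ≠ 0 := hlam0.ne'
  set q : ℝ := lam⁻¹ with hqdef
  have hq0 : 0 < q := by positivity
  have hql : q * lam = 1 := inv_mul_cancel₀ hlamne
  have hq1 : q < 1 := by
    rw [hqdef, inv_lt_one_iff₀]; right; exact hlam
  have hQ1 : 0 < 1 - (t - lam) + q := by
    have key1 : (1 - lam) * ((1 - (t - lam) + q) * lam) = (s - t) * lam := by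
      linear_combination (-1 : ℝ) * hchar + (1 - lam) * hql
    nlinarith [mul_pos (mul_pos hlam0 hlam0) hlam0]
  have hQm1 : 0 < 1 + (t - lam) + q := by
    have key2 : (-1 - lam) * ((1 + (t - lam) + q) * lam) = (-2 - t - s) * lam := by
      linear_combination hchar + (-1 - lam) * hql
    nlinarith [mul_pos (mul_pos hlam0 hlam0) hlam0]
  have hs : s = (t - lam) * lam + q := by
    have : s * lam = ((t - lam) * lam + q) * lam := by
      linear_combination hchar - hql
    exact mul_right_cancel₀ hlamne this
  -- recurrence for powers of A
  have hApow : ∀ k : ℕ, A ^ (k + 3) = t • A ^ (k + 2) - s • A ^ (k + 1) + A ^ k := by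
    intro k
    have h3 : A ^ (k + 3) = A ^ k * A ^ 3 := by rw [← pow_add]
    rw [h3, hCH, mul_add, mul_sub, Matrix.mul_smul, Matrix.mul_smul, mul_one,
      ← pow_add, ← pow_succ]
  -- convergence of normalized iterates, componentwise
  have hφ : ∀ i : Fin 3, ∃ Li : ℝ,
      Tendsto (fun k : ℕ => ((A ^ k) *ᵥ y) i / lam ^ k) atTop (𝓝 Li) := by
    intro i
    set f : ℕ → ℝ := fun k => ((A ^ k) *ᵥ y) i with hfdef
    have hfrec : ∀ k, f (k + 3) = t * f (k + 2) - s * f (k + 1) + f k := by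
      intro k
      have h := congrFun (congrArg (fun B => B *ᵥ y) (hApow k)) i
      simpa [hfdef, Matrix.add_mulVec, Matrix.sub_mulVec, Matrix.smul_mulVec,
        Matrix.one_mulVec] using h
    set g : ℕ → ℝ := fun k => f (k + 1) - lam * f k with hgdef
    have hgrec : ∀ k, g (k + 2) = (t - lam) * g (k + 1) - q * g k := by
      intro k
      simp only [hgdef]
      linear_combination hfrec k - f (k + 1) * hs - f k * hql
    obtain ⟨C1, C2, ρ, hC1, hC2, hρ0, hρ1, hbound⟩ :=
      seq_decay (t - lam) q g hq0 hq1 hQ1 hQm1 hgrec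
    have hsummaj : Summable (fun k : ℕ => C1 * ρ ^ k + C2 * ((k : ℝ) * ρ ^ k)) := by
      refine Summable.add ((summable_geometric_of_lt_one hρ0.le hρ1).mul_left C1) ?_
      have := summable_pow_mul_geometric_of_norm_lt_one (R := ℝ) 1
        (r := ρ) (by rwa [Real.norm_eq_abs, abs_of_pos hρ0])
      simpa using this.mul_left C2
    have hterm : ∀ k : ℕ, |g k / lam ^ (k + 1)| ≤ C1 * ρ ^ k + C2 * ((k : ℝ) * ρ ^ k) := by
      intro k
      have hpow1 : (1 : ℝ) ≤ lam ^ (k + 1) := one_le_pow₀ hlam.le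
      have h1 : |g k / lam ^ (k + 1)| ≤ |g k| := by
        rw [abs_div, abs_of_pos (by positivity : (0:ℝ) < lam ^ (k+1))]
        exact div_le_self (abs_nonneg _) hpow1
      refine h1.trans ((hbound k).trans (le_of_eq (by ring)))
    have hsum : Summable (fun k : ℕ => g k / lam ^ (k + 1)) :=
      Summable.of_abs (Summable.of_nonneg_of_le (fun k => abs_nonneg _) hterm hsummaj)
    have hφeq : ∀ k : ℕ, f k / lam ^ k = f 0 + ∑ j ∈ Finset.range k, g j / lam ^ (j + 1) := by
      intro k
      induction k with
      | zero => simp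
      | succ n ih =>
        rw [Finset.sum_range_succ, ← add_assoc, ← ih]
        simp only [hgdef]
        field_simp
        ring
    refine ⟨f 0 + ∑' j, g j / lam ^ (j + 1), ?_⟩
    have htend : Tendsto (fun k : ℕ => f 0 + ∑ j ∈ Finset.range k, g j / lam ^ (j + 1))
        atTop (𝓝 (f 0 + ∑' j, g j / lam ^ (j + 1))) :=
      (tendsto_const_nhds).add hsum.hasSum.tendsto_sum_nat
    exact htend.congr (fun k => (hφeq k).symm)
  choose L hL using hφ
  -- L is a lam-eigenvector
  have hALi : ∀ i, (A *ᵥ L) i = lam * L i := by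
    intro i
    have h1 : Tendsto (fun k : ℕ => ∑ j, A i j * (((A ^ k) *ᵥ y) j / lam ^ k)) atTop
        (𝓝 (∑ j, A i j * L j)) :=
      tendsto_finset_sum _ (fun j _ => (hL j).const_mul (A i j))
    have h2 : ∀ k : ℕ, ∑ j, A i j * (((A ^ k) *ᵥ y) j / lam ^ k)
        = lam * (((A ^ (k + 1)) *ᵥ y) i / lam ^ (k + 1)) := by
      intro k
      have hA1 : ((A ^ (k + 1)) *ᵥ y) i = ∑ j, A i j * (((A ^ k) *ᵥ y) j) := by
        rw [pow_succ', ← Matrix.mulVec_mulVec]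
        simp [Matrix.mulVec, dotProduct]
      rw [hA1]
      simp only [Fin.sum_univ_three]
      field_simp
      ring
    have h3 : Tendsto (fun k : ℕ => lam * (((A ^ (k + 1)) *ᵥ y) i / lam ^ (k + 1)))
        atTop (𝓝 (lam * L i)) :=
      (((hL i).comp (tendsto_add_atTop_nat 1)).const_mul lam)
    have h4 := h1.congr h2
    have h5 : (∑ j, A i j * L j) = lam * L i := tendsto_nhds_unique h4 h3
    rw [← h5]
    simp [Matrix.mulVec, dotProduct]
  have hALlam : A *ᵥ L = lam • L := by
    funext i
    rw [hALi i]
    simp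
  -- w ⬝ᵥ L = w ⬝ᵥ y
  have hwk : ∀ k : ℕ, w ⬝ᵥ ((A ^ k) *ᵥ y) = lam ^ k * (w ⬝ᵥ y) := by
    intro k
    induction k with
    | zero => simp [Matrix.one_mulVec]
    | succ n ih =>
      rw [pow_succ', ← Matrix.mulVec_mulVec, dotProduct_mulVec, hwA,
        smul_dotProduct, ih, smul_eq_mul]
      ring
  have hwL : w ⬝ᵥ L = w ⬝ᵥ y := by
    have h1 : Tendsto (fun k : ℕ => ∑ j, w j * (((A ^ k) *ᵥ y) j / lam ^ k)) atTop
        (𝓝 (∑ j, w j * L j)) :=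
      tendsto_finset_sum _ (fun j _ => (hL j).const_mul (w j))
    have h2 : ∀ k : ℕ, ∑ j, w j * (((A ^ k) *ᵥ y) j / lam ^ k) = w ⬝ᵥ y := by
      intro k
      have h := hwk k
      simp only [dotProduct, Fin.sum_univ_three] at h ⊢
      have hp : (0:ℝ) < lam ^ k := by positivity
      field_simp
      linear_combination h
    have h3 := h1.congr h2
    have h4 : (∑ j, w j * L j) = w ⬝ᵥ y := tendsto_nhds_unique h3 tendsto_const_nhds
    rw [← h4]
    simp [dotProduct]
  have hLneg' : ∀ i, L i < 0 := hLneg L hALlam (by rwa [hwL])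
  -- conclusion
  intro i
  have hlt : L i < L i / 2 := by linarith [hLneg' i]
  have hev : ∀ᶠ k in atTop, ((A ^ k) *ᵥ y) i / lam ^ k < L i / 2 :=
    (hL i).eventually_lt_const hlt
  have htarget : Tendsto (fun k : ℕ => L i / 2 * lam ^ k) atTop atBot := by
    rw [tendsto_const_mul_atBot_of_neg (by linarith [hLneg' i])]
    exact tendsto_pow_atTop_atTop_of_one_lt hlam
  refine tendsto_atBot_mono' atTop ?_ htarget
  filter_upwards [hev] with k hk
  have hp : (0:ℝ) < lam ^ k := by positivity
  calc ((A ^ k) *ᵥ y) i = ((A ^ k) *ᵥ y) i / lam ^ k * lam ^ k := by field_simp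
    _ ≤ L i / 2 * lam ^ k := by nlinarith



def Amat (a c : ℝ) : Matrix (Fin 3) (Fin 3) ℝ :=
  !![a * c - (1 - c), c, 1; 1 - (1 - a) * a, -(1 - a), 0; a, 1, 0]

lemma mulVec3 (B : Matrix (Fin 3) (Fin 3) ℝ) (x : Fin 3 → ℝ) (i : Fin 3) :
    (B *ᵥ x) i = B i 0 * x 0 + B i 1 * x 1 + B i 2 * x 2 := by
  simp [Matrix.mulVec, dotProduct, Fin.sum_univ_three]

lemma vecMul3 (B : Matrix (Fin 3) (Fin 3) ℝ) (x : Fin 3 → ℝ) (j : Fin 3) :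
    (x ᵥ* B) j = x 0 * B 0 j + x 1 * B 1 j + x 2 * B 2 j := by
  simp [Matrix.vecMul, dotProduct, Fin.sum_univ_three]

lemma amat_vecMul (a c lam : ℝ)
    (hchar : lam ^ 3 - (a * c + a + c - 2) * lam ^ 2 + ((1 - c) * (1 - a) - a - c) * lam - 1 = 0) :
    ![lam * (lam + (1 - a)), c * lam + 1, lam + (1 - a)] ᵥ* Amat a c
      = lam • ![lam * (lam + (1 - a)), c * lam + 1, lam + (1 - a)] := by
  funext j
  refine eq_of_sub_eq_zero ?_
  rw [vecMul3]
  fin_cases j <;>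
    simp [Amat, Matrix.vecHead, Matrix.vecTail, Pi.smul_apply, smul_eq_mul] <;>
    ring_nf
  · linear_combination (-1 : ℝ) * hchar


lemma amat_Lneg (a c lam : ℝ) (ha0 : 0 < a) (ha1 : a < 1) (hc0 : 0 < c) (hlam : 1 < lam)
    (L : Fin 3 → ℝ) (hAL : Amat a c *ᵥ L = lam • L)
    (hwL : ![lam * (lam + (1 - a)), c * lam + 1, lam + (1 - a)] ⬝ᵥ L < 0) :
    ∀ i, L i < 0 := by
  have e1 := congrFun hAL 1
  have e2 := congrFun hAL 2
  rw [mulVec3] at e1 e2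
  simp [Amat, Matrix.vecHead, Matrix.vecTail, Pi.smul_apply, smul_eq_mul] at e1 e2
  simp [dotProduct, Fin.sum_univ_three, Matrix.vecHead, Matrix.vecTail] at hwL
  have hpos1 : 0 < 1 - (1 - a) * a := by nlinarith
  have hpos2 : 0 < lam + (1 - a) := by nlinarith
  have hw0pos : 0 < lam * (lam + (1 - a)) := by nlinarith
  have hw1pos : 0 < c * lam + 1 := by nlinarith
  have hL0 : L 0 < 0 := by
    by_contra h0
    push_neg at h0
    have h1 : 0 ≤ L 1 := by nlinarith
    have h2 : 0 ≤ L 2 := by nlinarith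
    nlinarith [mul_nonneg hw0pos.le h0, mul_nonneg hw1pos.le h1, mul_nonneg hpos2.le h2]
  have hL1 : L 1 < 0 := by nlinarith
  have hL2 : L 2 < 0 := by nlinarith
  intro i
  fin_cases i <;> assumption


lemma amat_CH (a c : ℝ) :
    Amat a c ^ 3 = (a * c + a + c - 2) • Amat a c ^ 2
      - ((1 - c) * (1 - a) - a - c) • Amat a c + 1 := by
  have h3 : Amat a c ^ 3 = Amat a c * Amat a c * Amat a c := by
    rw [pow_succ, pow_two]
  have h2 : Amat a c ^ 2 = Amat a c * Amat a c := by rw [pow_two]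
  rw [h3, h2]
  ext i j
  fin_cases i <;> fin_cases j <;>
    simp [Amat, Matrix.mul_apply, Fin.sum_univ_three, Matrix.one_apply,
      Matrix.vecHead, Matrix.vecTail] <;> ring

lemma amat_main (a c : ℝ) (ha0 : 0 < a) (ha1 : a < 1) (hc0 : 0 < c) (hc1 : c < 1)
    (hac : 1 < a + c) (y : Fin 3 → ℝ) (hy : ∀ i, y i < 0) :
    ∀ i, Tendsto (fun k : ℕ => ((Amat a c ^ k) *ᵥ y) i) atTop atBot := by
  set t : ℝ := a * c + a + c - 2 with htdef
  set s : ℝ := (1 - c) * (1 - a) - a - c with hsdef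
  set P : ℝ → ℝ := fun x => x ^ 3 - t * x ^ 2 + s * x - 1 with hPdef
  have hcont : Continuous P := by
    simp only [hPdef]; continuity
  set X0 : ℝ := |t| + |s| + 2 with hX0def
  have hX2 : (2 : ℝ) ≤ X0 := by
    have := abs_nonneg t
    have := abs_nonneg s
    simp only [hX0def]
    linarith
  have h1X0 : (1 : ℝ) ≤ X0 := by linarith
  have hP1 : P 1 < 0 := by
    simp only [hPdef, hsdef, htdef]
    nlinarith
  have hPX0 : 0 ≤ P X0 := by
    simp only [hPdef]
    nlinarith [le_abs_self t, neg_abs_le t, le_abs_self s, neg_abs_le s,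
      abs_nonneg t, abs_nonneg s, sq_nonneg X0, sq_nonneg (X0 - 1)]
  have hIVT := intermediate_value_Icc h1X0 hcont.continuousOn
  have h0mem : (0 : ℝ) ∈ Icc (P 1) (P X0) := ⟨hP1.le, hPX0⟩
  obtain ⟨lam, hlamIcc, hlamroot⟩ := hIVT h0mem
  have hlam : 1 < lam := by
    rcases eq_or_lt_of_le hlamIcc.1 with h | h
    · exfalso; rw [← h] at hlamroot; rw [hlamroot] at hP1; exact lt_irrefl 0 hP1
    · exact h
  have hchar : lam ^ 3 - t * lam ^ 2 + s * lam - 1 = 0 := hlamroot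
  have hlam0 : (0 : ℝ) < lam := by linarith
  have hwy : ![lam * (lam + (1 - a)), c * lam + 1, lam + (1 - a)] ⬝ᵥ y < 0 := by
    have h0 := hy 0
    have h1 := hy 1
    have h2 := hy 2
    have hw0pos : 0 < lam * (lam + (1 - a)) := by nlinarith
    have hw1pos : 0 < c * lam + 1 := by nlinarith
    have hw2pos : 0 < lam + (1 - a) := by nlinarith
    simp only [dotProduct, Fin.sum_univ_three, Matrix.cons_val_zero,
      Matrix.cons_val_one, Matrix.head_cons, Matrix.cons_val_two, Matrix.tail_cons]
    nlinarith [mul_pos hw0pos (neg_pos.mpr h0), mul_pos hw1pos (neg_pos.mpr h1),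
      mul_pos hw2pos (neg_pos.mpr h2)]
  have hP1' : s - t < 0 := by nlinarith [hP1]
  have hPm1 : -2 - t - s < 0 := by
    simp only [htdef, hsdef]
    nlinarith
  exact core (Amat a c) t s lam _ (amat_CH a c) hlam hchar hP1' hPm1
    (amat_vecMul a c lam hchar)
    (amat_Lneg a c lam ha0 ha1 hc0 hlam) y hwy

lemma RSP_prod_eq (εx εy : ℝ) :
    M₁ εx εy * M₀ εx εy = Amat ((1 - εy)/2) ((1 - εx)/2) := by
  ext i j
  fin_cases i <;> fin_cases j <;>
    simp [M₀, M₁, Amat, Matrix.mul_apply, Fin.sum_univ_three,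
      Matrix.vecHead, Matrix.vecTail] <;> ring

lemma swap₀ (εx εy : ℝ) : M₀ εx εy = M₁ εy εx := rfl

lemma half (εx εy : ℝ) (hx : εx ∈ Set.Ioo (-1 : ℝ) 1) (hy : εy ∈ Set.Ioo (-1 : ℝ) 1)
    (hsum : εx + εy < 0) :
    UnegInf (M₁ εx εy * M₀ εx εy) = {y : Fin 3 → ℝ | ∀ i, y i < 0} := by
  obtain ⟨hx1, hx2⟩ := hx
  obtain ⟨hy1, hy2⟩ := hy
  ext y
  simp only [UnegInf, mem_setOf_eq]
  constructor
  · exact fun h => h.1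
  · intro h
    refine ⟨h, ?_⟩
    rw [RSP_prod_eq]
    exact amat_main ((1 - εy)/2) ((1 - εx)/2) (by linarith) (by linarith)
      (by linarith) (by linarith) (by linarith) y h


/-- For the RSP transition matrices with `εx + εy < 0`, the sets `U^{-∞}` of the
return matrices `M₁M₀` and `M₀M₁` are the full open negative octant. -/
theorem stmt12 (εx εy : ℝ) (hx : εx ∈ Set.Ioo (-1 : ℝ) 1) (hy : εy ∈ Set.Ioo (-1 : ℝ) 1)
    (hsum : εx + εy < 0) :
    UnegInf (M₁ εx εy * M₀ εx εy) = {y : Fin 3 → ℝ | ∀ i, y i < 0} ∧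
    UnegInf (M₀ εx εy * M₁ εx εy) = {y : Fin 3 → ℝ | ∀ i, y i < 0} := by
  constructor
  · exact half εx εy hx hy hsum
  · have he : M₀ εx εy * M₁ εx εy = M₁ εy εx * M₀ εy εx := by
      rw [swap₀ εx εy, ← swap₀ εy εx]
    rw [he]
    exact half εy εx hy hx (by linarith)
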